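/- Let n ≥ 2, let I ⊆ ℝ be an interval, let ω = (ω₁,…,ωₙ) be a Chebyshev system on I such that (ω₁,…,ω_{n−1}) is also a Chebyshev system on I, let cₙ ∈ ℝ and f : I → ℝ. Then for any n−1 pairwise distinct points x₁,…,x_{n−1} in the interior of I there exist constants c₁,…,c_{n−1} ∈ ℝ such that the function g = c₁ω₁ + ⋯ + c_{n−1}ω_{n−1} + cₙωₙ satisfies g(xₖ) = f(xₖ) for k = 1,…,n−1 and f(x) − g(x) = ( D_{n−1}(x₁,…,x_{n−1},x;f) − cₙ·Vₙ(x₁,…,x_{n−1},x) ) / V_{n−1}(x₁,…,x_{n−1}) for all x ∈ I \ {x₁,…,x_{n−1}}. -/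

import Mathlib

/-- `chebV ω x` is the determinant `Vₙ(x₁,…,xₙ)` with `(i,j)` entry `ωᵢ(xⱼ)`. -/
noncomputable def chebV {n : ℕ} (ω : Fin n → ℝ → ℝ) (x : Fin n → ℝ) : ℝ :=
  Matrix.det (Matrix.of fun i j => ω i (x j))

/-- `chebD ω f x` is the determinant `Dₙ(x₁,…,x_{n+1};f)` whose first `n` rows are
`ωᵢ(x₁),…,ωᵢ(x_{n+1})` and whose last row is `f(x₁),…,f(x_{n+1})`. -/
noncomputable def chebD {n : ℕ} (ω : Fin n → ℝ → ℝ) (f : ℝ → ℝ) (x : Fin (n + 1) → ℝ) : ℝ :=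
  Matrix.det (Matrix.of (Fin.snoc (fun i j => ω i (x j)) (fun j => f (x j)) :
    Fin (n + 1) → Fin (n + 1) → ℝ))

/-- `ω = (ω₁,…,ωₙ)` is a Chebyshev system on `I`: the `ωᵢ` are continuous on `I` and
`Vₙ(x₁,…,xₙ) ≠ 0` whenever `x₁ < ⋯ < xₙ` in `I`. -/
def IsChebyshevOn {n : ℕ} (ω : Fin n → ℝ → ℝ) (I : Set ℝ) : Prop :=
  (∀ i, ContinuousOn (ω i) I) ∧
    ∀ x : Fin n → ℝ, (∀ i, x i ∈ I) → StrictMono x → chebV ω x ≠ 0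

/-- `ω = (ω₁,…,ωₙ)` is a positive Chebyshev system on `I`. -/
def IsPosChebyshevOn {n : ℕ} (ω : Fin n → ℝ → ℝ) (I : Set ℝ) : Prop :=
  (∀ i, ContinuousOn (ω i) I) ∧
    ∀ x : Fin n → ℝ, (∀ i, x i ∈ I) → StrictMono x → 0 < chebV ω x

/-- The generalized divided difference `[x₁,…,x_{n+1};f]_ω = D_n(x₁,…,x_{n+1};f)/V_{n+1}(x₁,…,x_{n+1})`,
where the numerator is formed from the first `n` functions of the `(n+1)`-element system `ω`. -/
noncomputable def divDiff {n : ℕ} (ω : Fin (n + 1) → ℝ → ℝ) (f : ℝ → ℝ)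
    (x : Fin (n + 1) → ℝ) : ℝ :=
  chebD (fun i : Fin n => ω i.castSucc) f x / chebV ω x

/-- `f` is `ω`-`(n+1)`-convex on `I` for the `(n+1)`-element system `ω`. -/
def IsConvexOmega {n : ℕ} (ω : Fin (n + 1) → ℝ → ℝ) (I : Set ℝ) (f : ℝ → ℝ) : Prop :=
  ∀ x : Fin (n + 1) → ℝ, (∀ i, x i ∈ I) → StrictMono x →
    ∀ c : Fin (n + 1) → ℝ, (∀ i, (∑ k, c k * ω k (x i)) = f (x i)) →
      (∀ t ∈ I, t ≤ x 0 → 0 ≤ (-1 : ℝ) ^ (n + 1) * (f t - ∑ k, c k * ω k t)) ∧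
      (∀ j : Fin n, ∀ t ∈ I, x j.castSucc ≤ t → t ≤ x j.succ →
        0 ≤ (-1 : ℝ) ^ (n + (j : ℕ) + 2) * (f t - ∑ k, c k * ω k t)) ∧
      (∀ t ∈ I, x (Fin.last n) ≤ t → 0 ≤ f t - ∑ k, c k * ω k t)

/-- **Lemma 1.** Given `cₙ ∈ ℝ` and `n−1 = m+1` pairwise distinct points in the interior of `I`,
there exist constants `c₁,…,c_{n−1}` such that `g = c₁ω₁ + ⋯ + c_{n−1}ω_{n−1} + cₙωₙ`
interpolates `f` at the given points and
`f(x) − g(x) = (D_{n−1}(x₁,…,x_{n−1},x;f) − cₙ·Vₙ(x₁,…,x_{n−1},x)) / V_{n−1}(x₁,…,x_{n−1})`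
for all `x ∈ I \ {x₁,…,x_{n−1}}`. -/
lemma chebV_ne_zero_of_injective {n : ℕ} {ω : Fin n → ℝ → ℝ} {I : Set ℝ}
    (h : IsChebyshevOn ω I) {x : Fin n → ℝ} (hx : ∀ i, x i ∈ I)
    (hinj : Function.Injective x) : chebV ω x ≠ 0 := by
  classical
  set σ := Tuple.sort x with hσ
  have hmono : Monotone (x ∘ σ) := Tuple.monotone_sort x
  have hsm : StrictMono (x ∘ σ) :=
    hmono.strictMono_of_injective (hinj.comp σ.injective)
  have h1 : chebV ω (x ∘ σ) ≠ 0 := h.2 _ (fun i => hx _) hsm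
  have h2 : chebV ω (x ∘ σ) =
      ((Equiv.Perm.sign σ : ℤ) : ℝ) * chebV ω x := by
    have heq : (Matrix.of fun i j => ω i ((x ∘ σ) j)) =
        (Matrix.of fun i j => ω i (x j)).submatrix id σ := rfl
    rw [chebV, heq, Matrix.det_permute']
    rfl
  intro h0
  rw [h2, h0, mul_zero] at h1
  exact h1 rfl

theorem exists_interpolant_sub_eq {m : ℕ} (I : Set ℝ) (hI : I.OrdConnected)
    (ω : Fin (m + 2) → ℝ → ℝ)
    (hω : IsChebyshevOn ω I)
    (hω' : IsChebyshevOn (fun i : Fin (m + 1) => ω i.castSucc) I)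
    (cn : ℝ) (f : ℝ → ℝ)
    (x : Fin (m + 1) → ℝ) (hx : ∀ i, x i ∈ interior I)
    (hinj : Function.Injective x) :
    ∃ c : Fin (m + 1) → ℝ,
      (∀ k, (∑ i, c i * ω i.castSucc (x k)) + cn * ω (Fin.last (m + 1)) (x k) = f (x k)) ∧
      ∀ t ∈ I \ Set.range x,
        f t - ((∑ i, c i * ω i.castSucc t) + cn * ω (Fin.last (m + 1)) t) =
          (chebD (fun i : Fin (m + 1) => ω i.castSucc) f (Fin.snoc x t) -
              cn * chebV ω (Fin.snoc x t)) /
            chebV (fun i : Fin (m + 1) => ω i.castSucc) x := by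
  classical
  have hxI : ∀ i, x i ∈ I := fun i => interior_subset (hx i)
  have hV : chebV (fun i : Fin (m + 1) => ω i.castSucc) x ≠ 0 :=
    chebV_ne_zero_of_injective hω' hxI hinj
  set M1 : Matrix (Fin (m + 1)) (Fin (m + 1)) ℝ :=
    Matrix.of (fun i j => ω (Fin.castSucc i) (x j)) with hM1
  have hdet : M1.det ≠ 0 := hV
  set h : ℝ → ℝ := fun t => f t - cn * ω (Fin.last (m + 1)) t with hh
  set c : Fin (m + 1) → ℝ := M1.transpose⁻¹.mulVec (fun k => h (x k)) with hc
  have hcsolve : ∀ k, (∑ i, c i * ω (Fin.castSucc i) (x k)) = h (x k) := by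
    intro k
    have hdetT : IsUnit M1.transpose.det := by
      rw [Matrix.det_transpose]; exact isUnit_iff_ne_zero.mpr hdet
    have h1 : M1.transpose.mulVec c = fun k => h (x k) := by
      rw [hc, Matrix.mulVec_mulVec, Matrix.mul_nonsing_inv _ hdetT, Matrix.one_mulVec]
    have h2 := congrFun h1 k
    simp only [Matrix.mulVec, dotProduct, Matrix.transpose_apply, hM1,
      Matrix.of_apply] at h2
    rw [← h2]
    exact Finset.sum_congr rfl fun i _ => mul_comm _ _
  refine ⟨c, ?_, ?_⟩
  · intro k
    have := hcsolve k
    simp only [hh] at this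
    linarith
  · rintro t ⟨htI, htx⟩
    set y : Fin (m + 2) → ℝ := Fin.snoc x t with hy
    set M0 : Matrix (Fin (m + 2)) (Fin (m + 2)) ℝ :=
      Matrix.of (fun i j => ω i (y j)) with hM0
    set L := Fin.last (m + 1) with hL
    -- express chebD as determinant of an updateRow of M0
    have hbD : chebD (fun i : Fin (m + 1) => ω i.castSucc) f y =
        (M0.updateRow L (fun j => f (y j))).det := by
      unfold chebD
      congr 1
      ext i j
      refine Fin.lastCases ?_ ?_ i
      · simp [hL, Matrix.updateRow_self]
      · intro i'
        have hne : (Fin.castSucc i') ≠ L := (Fin.castSucc_lt_last i').ne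
        simp [Matrix.updateRow_ne hne, hM0]
    have hbV : chebV ω y = (M0.updateRow L (fun j => ω L (y j))).det := by
      rw [show (fun j => ω L (y j)) = M0 L from rfl, Matrix.updateRow_eq_self]
      rfl
    -- combine into determinant with last row h ∘ y
    have hcomb : chebD (fun i : Fin (m + 1) => ω i.castSucc) f y -
        cn * chebV ω y = (M0.updateRow L (fun j => h (y j))).det := by
      rw [hbD, hbV]
      have : (fun j => h (y j)) =
          (fun j => f (y j)) + (-cn) • (fun j => ω L (y j)) := by
        funext j; simp [hh]; ring
      rw [this, Matrix.det_updateRow_add, Matrix.det_updateRow_smul]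
      ring
    -- value of the remainder at t
    set r : ℝ := h t - ∑ i, c i * ω (Fin.castSucc i) t with hr
    -- decompose the last row
    have hrow : (fun j => h (y j)) =
        (∑ i : Fin (m + 2), (Fin.snoc c 0 : Fin (m + 2) → ℝ) i • M0 i) +
          Pi.single L r := by
      funext j
      simp only [Pi.add_apply, Finset.sum_apply, Pi.smul_apply, smul_eq_mul]
      rw [Fin.sum_univ_castSucc]
      simp only [Fin.snoc_castSucc, Fin.snoc_last, zero_mul, add_zero]
      refine Fin.lastCases ?_ ?_ j
      · rw [Pi.single_eq_same]
        simp only [hM0, Matrix.of_apply, hy, Fin.snoc_last]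
        rw [hr]; ring
      · intro j'
        have hne : (Fin.castSucc j') ≠ L := (Fin.castSucc_lt_last j').ne
        rw [Pi.single_eq_of_ne hne]
        simp only [hM0, Matrix.of_apply, hy, Fin.snoc_castSucc, add_zero]
        exact (hcsolve j').symm
    have hzero : (M0.updateRow L (∑ i : Fin (m + 2),
        (Fin.snoc c 0 : Fin (m + 2) → ℝ) i • M0 i)).det = 0 := by
      rw [Matrix.det_updateRow_sum]
      simp [hL]
    have hsingle : (M0.updateRow L (Pi.single L r)).det =
        r * chebV (fun i : Fin (m + 1) => ω i.castSucc) x := by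
      rw [Matrix.det_succ_row _ L]
      rw [Finset.sum_eq_single L]
      · have h1 : (M0.updateRow L (Pi.single L r)) L L = r := by
          simp [Matrix.updateRow_self]
        have h2 : ((M0.updateRow L (Pi.single L r)).submatrix
            L.succAbove L.succAbove) =
            Matrix.of (fun i j : Fin (m + 1) => ω i.castSucc (x j)) := by
          ext i j
          simp only [Matrix.submatrix_apply, hL, Fin.succAbove_last]
          rw [Matrix.updateRow_ne (Fin.castSucc_lt_last i).ne]
          simp [hM0, hy]
        rw [h1, h2]
        have : ((L : ℕ) + (L : ℕ)) = 2 * (m + 1) := by simp [hL]; ring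
        rw [this]
        simp [pow_mul, chebV]
      · intro j _ hj
        have : (M0.updateRow L (Pi.single L r)) L j = 0 := by
          rw [Matrix.updateRow_self]
          exact Pi.single_eq_of_ne hj _
        simp [this]
      · simp
    have hfg : f t - ((∑ i, c i * ω i.castSucc t) + cn * ω L t) = r := by
      rw [hr, hh]; ring
    rw [hfg, hcomb, hrow, Matrix.det_updateRow_add, hzero, hsingle, zero_add,
      mul_div_assoc, div_self hV, mul_one]
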